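/- Let n ≥ 1, let D_n be the dihedral group of order 2n, and let A be a finite set with k = |A| ≥ 2. Let D_n act on itself by left multiplication (this models the set of vertices of a regular n-prism), and act on colorings f : D_n → A by (g•f)(x) = f(g⁻¹x). Then the number of orbits of colorings that are free (i.e., have cardinality 2n, equivalently trivial point stabilizers) equals (1/2)·Σ_{d∣n} μ(n/d)·((1/n)·k^{2d} − k^d), where μ is the Möbius function. Equivalently, this number is (1/2)·(M(k², n) − n·M(k, n)), where M(k,m) = (1/m)·Σ_{d∣m} μ(m/d)·k^d. -/

import Mathlib

/-- The action of the dihedral group `D_n` on colorings `f : D_n → A` of the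
vertices of a regular `n`-prism (modelled by `D_n` acting on itself by left
multiplication): `(g • f) x = f (g⁻¹ * x)`. -/
instance prismColoringAction (n : ℕ) (A : Type*) :
    MulAction (DihedralGroup n) (DihedralGroup n → A) where
  smul g f := fun x => f (g⁻¹ * x)
  one_smul f := by funext x; show f (1⁻¹ * x) = f x; rw [inv_one, one_mul]
  mul_smul a b f := by
    funext x; show f ((a * b)⁻¹ * x) = f (b⁻¹ * (a⁻¹ * x))
    rw [mul_inv_rev, mul_assoc]


open Function

namespace PrismAux

variable {n : ℕ} {C : Type*}

/-- Shift a function `ZMod n → C` by one. -/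
def sh (f : ZMod n → C) : ZMod n → C := fun i => f (i + 1)

lemma sh_iterate (m : ℕ) (f : ZMod n → C) :
    sh^[m] f = fun i => f (i + (m : ZMod n)) := by
  induction m with
  | zero => simp [sh]
  | succ k ih =>
    rw [Function.iterate_succ_apply', ih]
    funext i
    show f (i + 1 + k) = f (i + (k + 1 : ℕ))
    congr 1
    push_cast
    ring

lemma isPeriodicPt_iff (m : ℕ) (f : ZMod n → C) :
    IsPeriodicPt sh m f ↔ ∀ i, f (i + (m : ZMod n)) = f i := by
  unfold IsPeriodicPt IsFixedPt
  rw [sh_iterate]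
  constructor
  · intro h i; exact congrFun h i
  · intro h; funext i; exact h i

/-- The exact period of `f` under cyclic shifts. -/
noncomputable def per (f : ZMod n → C) : ℕ := minimalPeriod sh f

lemma isPeriodicPt_n [NeZero n] (f : ZMod n → C) : IsPeriodicPt sh n f := by
  rw [isPeriodicPt_iff]
  simp [ZMod.natCast_self]

lemma per_dvd [NeZero n] (f : ZMod n → C) : per f ∣ n :=
  (isPeriodicPt_n f).minimalPeriod_dvd

lemma per_pos [NeZero n] (f : ZMod n → C) : 0 < per f :=
  (isPeriodicPt_n f).minimalPeriod_pos (NeZero.pos n)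

/-- `f` is aperiodic: no nontrivial shift fixes it. -/
def Aper (f : ZMod n → C) : Prop := ∀ m : ZMod n, (∀ i, f (i + m) = f i) → m = 0

lemma aper_iff [NeZero n] (f : ZMod n → C) : Aper f ↔ per f = n := by
  constructor
  · intro h
    refine Nat.dvd_antisymm (per_dvd f) ?_
    rw [← ZMod.natCast_eq_zero_iff]
    apply h
    rw [← isPeriodicPt_iff]
    exact isPeriodicPt_minimalPeriod sh f
  · intro h m hm
    have hp : IsPeriodicPt sh m.val f := by
      rw [isPeriodicPt_iff]
      intro i
      rw [ZMod.natCast_rightInverse m]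
      exact hm i
    have hd : per f ∣ m.val := hp.minimalPeriod_dvd
    rw [h] at hd
    have hv : m.val = 0 := Nat.eq_zero_of_dvd_of_lt hd m.val_lt
    · rw [← ZMod.natCast_rightInverse m, hv, Nat.cast_zero]

lemma per_eq_iff [NeZero n] (f : ZMod n → C) (d : ℕ) :
    IsPeriodicPt sh d f ↔ per f ∣ d :=
  isPeriodicPt_iff_minimalPeriod_dvd

end PrismAux

namespace PrismAux

lemma cast_mod_n {d : ℕ} (hd : d ∣ n) (m : ℕ) : ((m % n : ℕ) : ZMod d) = (m : ZMod d) := by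
  conv_rhs => rw [← Nat.mod_add_div m n]
  push_cast
  rw [(ZMod.natCast_eq_zero_iff n d).mpr hd]
  ring

lemma periodic_natCast {d : ℕ} {f : ZMod n → C} (hp : IsPeriodicPt sh d f) (a : ℕ) :
    f ((a : ZMod n)) = f (((a % d) : ℕ) : ZMod n) := by
  have h1 : IsPeriodicPt sh (d * (a / d)) f := hp.mul_const _
  rw [isPeriodicPt_iff] at h1
  have h2 := h1 (((a % d) : ℕ) : ZMod n)
  calc f ((a : ZMod n)) = f (((a % d + d * (a / d) : ℕ) : ZMod n)) := by
        rw [Nat.mod_add_div]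
    _ = f (((a % d : ℕ) : ZMod n) + ((d * (a / d) : ℕ) : ZMod n)) := by push_cast; ring_nf
    _ = f (((a % d) : ℕ) : ZMod n) := h2

/-- d-periodic functions `ZMod n → C` are equivalent to functions `ZMod d → C`, for `d ∣ n`. -/
noncomputable def periodicEquiv [NeZero n] {d : ℕ} [NeZero d] (hd : d ∣ n) :
    {f : ZMod n → C // IsPeriodicPt sh d f} ≃ (ZMod d → C) where
  toFun g := fun j => g.1 ((j.val : ZMod n))
  invFun h := ⟨fun i => h ((i.val : ZMod d)), by
    rw [isPeriodicPt_iff]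
    intro i
    show h (((i + (d : ZMod n)).val : ZMod d)) = h ((i.val : ZMod d))
    congr 1
    rw [ZMod.val_add, cast_mod_n hd]
    push_cast
    rw [ZMod.val_natCast, cast_mod_n hd]
    simp⟩
  left_inv g := by
    ext i
    show g.1 ((((i.val : ZMod d)).val : ZMod n)) = g.1 i
    rw [ZMod.val_natCast]
    conv_rhs => rw [← ZMod.natCast_rightInverse i]
    rw [← periodic_natCast g.2]
  right_inv h := by
    funext j
    show h ((((j.val : ZMod n)).val : ZMod d)) = h j
    rw [ZMod.val_natCast, cast_mod_n hd, ZMod.natCast_rightInverse j]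

lemma card_periodic [NeZero n] [Fintype C] {d : ℕ} (hd : d ∣ n) (hd0 : 0 < d) :
    Nat.card {f : ZMod n → C // IsPeriodicPt sh d f} = Fintype.card C ^ d := by
  haveI : NeZero d := ⟨hd0.ne'⟩
  rw [Nat.card_congr (periodicEquiv hd), Nat.card_fun, Nat.card_zmod,
    Nat.card_eq_fintype_card]

end PrismAux

namespace PrismAux

open ArithmeticFunction Finset

lemma card_aper (n : ℕ) [NeZero n] (C : Type*) [Fintype C] :
    (Nat.card {f : ZMod n → C // Aper f} : ℚ) =
      ∑ d ∈ n.divisors, (moebius (n / d) : ℚ) * (Fintype.card C : ℚ) ^ d := by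
  classical
  set E : ℕ → ℚ := fun e => (Nat.card {f : ZMod n → C // per f = e} : ℚ) with hE
  have hsum : ∀ d > 0, d ∈ {d | d ∣ n} → ∑ e ∈ d.divisors, E e = (Fintype.card C : ℚ) ^ d := by
    intro d hd0 hdn
    have h1 : Nat.card {f : ZMod n → C // IsPeriodicPt sh d f} = Fintype.card C ^ d :=
      card_periodic hdn hd0
    have h2 : (Finset.univ.filter (fun f : ZMod n → C => per f ∣ d)).card
        = ∑ e ∈ d.divisors, (Finset.univ.filter (fun f : ZMod n → C => per f = e)).card := by
      rw [Finset.card_eq_sum_card_fiberwise (f := per) (t := d.divisors)]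
      · apply Finset.sum_congr rfl
        intro e he
        congr 1
        rw [Finset.filter_filter]
        apply Finset.filter_congr
        intro f _
        constructor
        · rintro ⟨-, h⟩; exact h
        · intro h; exact ⟨h ▸ Nat.dvd_of_mem_divisors he, h⟩
      · intro f hf
        rw [Finset.mem_coe, Finset.mem_filter] at hf
        exact Finset.mem_coe.mpr (Nat.mem_divisors.mpr ⟨hf.2, hd0.ne'⟩)
    have h3 : Nat.card {f : ZMod n → C // IsPeriodicPt sh d f}
        = (Finset.univ.filter (fun f : ZMod n → C => per f ∣ d)).card := by
      rw [Nat.card_eq_fintype_card, Fintype.card_subtype]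
      congr 1
      apply Finset.filter_congr
      intro f _
      exact per_eq_iff f d
    have : ∑ e ∈ d.divisors, E e
        = ((∑ e ∈ d.divisors, (Finset.univ.filter (fun f : ZMod n → C => per f = e)).card : ℕ) : ℚ) := by
      push_cast
      apply Finset.sum_congr rfl
      intro e _
      show (Nat.card {f : ZMod n → C // per f = e} : ℚ) = _
      rw [Nat.card_eq_fintype_card, Fintype.card_subtype]
    rw [this, ← h2, ← h3, h1]
    push_cast
    ring
  have hinv := (ArithmeticFunction.sum_eq_iff_sum_smul_moebius_eq_on {d | d ∣ n}
    (fun m k hmk hk => hmk.trans hk) (f := E)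
    (g := fun d => (Fintype.card C : ℚ) ^ d)).mp hsum n (NeZero.pos n) (dvd_refl n)
  rw [Nat.sum_divisorsAntidiagonal' (f := fun x y => (moebius x : ℤ) • ((Fintype.card C : ℚ) ^ y))] at hinv
  have : (Nat.card {f : ZMod n → C // Aper f} : ℚ) = E n := by
    rw [hE]
    congr 1
    exact Nat.card_congr (Equiv.subtypeEquivRight (fun f => aper_iff f))
  rw [this, ← hinv]
  apply Finset.sum_congr rfl
  intro d _
  rw [zsmul_eq_mul]


end PrismAux
namespace PrismAux

open DihedralGroup

variable {n : ℕ} {A : Type*}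

lemma psmul_apply (g x : DihedralGroup n) (f : DihedralGroup n → A) :
    (g • f) x = f (g⁻¹ * x) := rfl

lemma r_inv (j : ZMod n) : (r j)⁻¹ = r (-j) := rfl
lemma sr_inv (j : ZMod n) : (sr j)⁻¹ = sr j := rfl

/-- Colorings of `D_n` as pairs of necklace colorings. -/
def psi : (DihedralGroup n → A) ≃ (ZMod n → A × A) where
  toFun f := fun i => (f (r i), f (sr (-i)))
  invFun g := fun x => match x with
    | r i => (g i).1
    | sr i => (g (-i)).2
  left_inv f := by
    funext x
    cases x with
    | r i => rfl
    | sr i => show (f (r (- -i)), f (sr (- -i))).2 = f (sr i); rw [neg_neg]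
  right_inv g := by
    funext i
    show (((g i).1, (g (- -i)).2) : A × A) = g i
    rw [neg_neg]

lemma rot_fix_iff (j : ZMod n) (f : DihedralGroup n → A) :
    (r j • f = f) ↔ ∀ i, psi f (i + j) = psi f i := by
  constructor
  · intro h i
    have h1 := congrFun h (r (i + j))
    rw [psmul_apply, r_inv, r_mul_r] at h1
    rw [show -j + (i + j) = i by ring] at h1
    have h2 := congrFun h (sr (-i - j))
    rw [psmul_apply, r_inv, r_mul_sr] at h2
    rw [show -i - j - -j = -i by ring] at h2
    show (f (r (i + j)), f (sr (-(i + j)))) = (f (r i), f (sr (-i)))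
    rw [show -(i + j) = -i - j by ring, h1, h2]
  · intro h
    funext x
    rw [psmul_apply, r_inv]
    cases x with
    | r i =>
      rw [r_mul_r]
      have := congrArg Prod.fst (h (i - j))
      simp only [psi, Equiv.coe_fn_mk] at this
      rw [show i - j + j = i by ring] at this
      rw [show -j + i = i - j by ring, this]
    | sr i =>
      rw [r_mul_sr]
      have := congrArg Prod.snd (h (-i - j))
      simp only [psi, Equiv.coe_fn_mk] at this
      rw [show -(-i - j + j) = i by ring, show -(-i - j) = i + j by ring] at this
      rw [show i - -j = i + j by ring, this]

lemma sr_fix_iff (j : ZMod n) (f : DihedralGroup n → A) :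
    (sr j • f = f) ↔ ∀ i, f (sr i) = f (r (i - j)) := by
  constructor
  · intro h i
    have h1 := congrFun h (sr i)
    rw [psmul_apply, sr_inv, sr_mul_sr] at h1
    exact h1.symm
  · intro h
    funext x
    rw [psmul_apply, sr_inv]
    cases x with
    | r i =>
      rw [sr_mul_r]
      have := h (j + i)
      rw [show j + i - j = i by ring] at this
      exact this
    | sr i =>
      rw [sr_mul_sr]
      exact (h i).symm

/-- No nontrivial rotation fixes `f`. -/
def NoRot (f : DihedralGroup n → A) : Prop := ∀ j : ZMod n, r j • f = f → j = 0

/-- `f` has trivial stabilizer. -/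
def Free (f : DihedralGroup n → A) : Prop := ∀ g : DihedralGroup n, g • f = f → g = 1

lemma norot_iff_aper (f : DihedralGroup n → A) : NoRot f ↔ Aper (psi f) := by
  unfold NoRot Aper
  constructor
  · intro h m hm
    exact h m ((rot_fix_iff m f).mpr hm)
  · intro h j hj
    exact h j ((rot_fix_iff j f).mp hj)

lemma free_iff_norot (f : DihedralGroup n → A) :
    Free f ↔ NoRot f ∧ ∀ j : ZMod n, ¬(sr j • f = f) := by
  constructor
  · intro h
    constructor
    · intro j hj
      have := h (r j) hj
      rw [one_def] at this
      exact r.inj this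
    · intro j hj
      have := h (sr j) hj
      rw [one_def] at this
      exact absurd this (fun h => by cases h)
  · rintro ⟨h1, h2⟩ g hg
    cases g with
    | r j => rw [h1 j hg, one_def]
    | sr j => exact absurd hg (h2 j)

end PrismAux

namespace PrismAux

open DihedralGroup

variable {n : ℕ} [NeZero n] {A : Type*} [Fintype A]

lemma card_norot (A : Type*) (n : ℕ) :
    Nat.card {f : DihedralGroup n → A // NoRot f}
      = Nat.card {g : ZMod n → A × A // Aper g} :=
  Nat.card_congr (Equiv.subtypeEquiv psi norot_iff_aper)

lemma norot_iff_or (f : DihedralGroup n → A) :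
    NoRot f ↔ Free f ∨ (NoRot f ∧ ∃ j : ZMod n, sr j • f = f) := by
  constructor
  · intro h
    by_cases hr : ∃ j : ZMod n, sr j • f = f
    · exact Or.inr ⟨h, hr⟩
    · push_neg at hr
      exact Or.inl ((free_iff_norot f).mpr ⟨h, hr⟩)
  · rintro (h | h)
    · exact ((free_iff_norot f).mp h).1
    · exact h.1

lemma card_norot_split (A : Type*) [Fintype A] (n : ℕ) [NeZero n] :
    Nat.card {f : DihedralGroup n → A // NoRot f}
      = Nat.card {f : DihedralGroup n → A // Free f}
        + Nat.card {f : DihedralGroup n → A // NoRot f ∧ ∃ j : ZMod n, sr j • f = f} := by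
  classical
  have hdisj : Disjoint (fun f : DihedralGroup n → A => Free f)
      (fun f => NoRot f ∧ ∃ j : ZMod n, sr j • f = f) := by
    rw [Pi.disjoint_iff]
    intro f
    rw [Prop.disjoint_iff]
    rintro ⟨hfree, -, j, hj⟩
    have := hfree (sr j) hj
    rw [one_def] at this
    cases this
  calc Nat.card {f : DihedralGroup n → A // NoRot f}
      = Nat.card {f : DihedralGroup n → A //
          Free f ∨ (NoRot f ∧ ∃ j : ZMod n, sr j • f = f)} :=
        Nat.card_congr (Equiv.subtypeEquivRight norot_iff_or)
    _ = _ := by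
        rw [Nat.card_eq_fintype_card, Fintype.card_subtype_or_disjoint _ _ hdisj,
          Nat.card_eq_fintype_card, Nat.card_eq_fintype_card]

lemma card_norot_refl (A : Type*) [Fintype A] (n : ℕ) [NeZero n] :
    Nat.card {f : DihedralGroup n → A // NoRot f ∧ ∃ j : ZMod n, sr j • f = f}
      = n * Nat.card {h : ZMod n → A // Aper h} := by
  have hb : Function.Bijective
      (fun x : ZMod n × {h : ZMod n → A // Aper h} =>
        (⟨fun y => match y with
          | r i => x.2.1 i
          | sr i => x.2.1 (i - x.1), by
            obtain ⟨j, h, hh⟩ := x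
            constructor
            · intro m hm
              apply hh m
              intro i
              exact congrArg Prod.fst (((rot_fix_iff m _).mp hm) i)
            · refine ⟨j, (sr_fix_iff j _).mpr fun i => rfl⟩⟩ :
          {f : DihedralGroup n → A // NoRot f ∧ ∃ j : ZMod n, sr j • f = f})) := by
    constructor
    · rintro ⟨j, h, hh⟩ ⟨j', h', hh'⟩ heq
      have heq' := congrArg Subtype.val heq
      have hfun : ∀ y : DihedralGroup n, _ = _ := fun y => congrFun heq' y
      have hhh : h = h' := by
        funext i
        exact hfun (r i)
      subst hhh
      have hj : j = j' := by
        have : ∀ i : ZMod n, h (i + (j' - j)) = h i := by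
          intro i
          have h2 : h (i + j' - j) = h (i + j' - j') := hfun (sr (i + j'))
          rw [show i + j' - j = i + (j' - j) by ring, show i + j' - j' = i by ring] at h2
          exact h2
        have := hh _ this
        have : j' = j := by linear_combination this
        exact this.symm
      subst hj
      rfl
    · rintro ⟨f, hf, j, hj⟩
      have hjf := (sr_fix_iff j f).mp hj
      refine ⟨⟨j, ⟨fun i => f (r i), ?_⟩⟩, ?_⟩
      · intro m hm
        apply hf m
        rw [rot_fix_iff]
        intro i
        show (f (r (i + m)), f (sr (-(i + m)))) = (f (r i), f (sr (-i)))
        have h1 : f (r (i + m)) = f (r i) := hm i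
        have h2 : f (sr (-(i + m))) = f (sr (-i)) := by
          rw [hjf (-(i + m)), hjf (-i)]
          have := hm (-(i + m) - j)
          rw [show -(i + m) - j + m = -i - j by ring] at this
          rw [show -(i + m) - j = -(i+m) - j by ring]
          exact this.symm
        rw [h1, h2]
      · apply Subtype.ext
        funext y
        cases y with
        | r i => rfl
        | sr i => exact (hjf i).symm
  rw [← Nat.card_eq_of_bijective _ hb, Nat.card_prod, Nat.card_zmod]

end PrismAux

namespace PrismAux

open DihedralGroup

lemma free_iff_card_orbit {n : ℕ} [NeZero n] {A : Type*} [Fintype A]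
    (f : DihedralGroup n → A) :
    Free f ↔ Nat.card (MulAction.orbit (DihedralGroup n) f) = 2 * n := by
  have horb : Nat.card (MulAction.orbit (DihedralGroup n) f)
      * Nat.card (MulAction.stabilizer (DihedralGroup n) f) = 2 * n := by
    rw [← Nat.card_prod,
      Nat.card_congr (MulAction.orbitProdStabilizerEquivGroup (DihedralGroup n) f),
      Nat.card_eq_fintype_card, DihedralGroup.card]
  have hstab : Free f ↔ Nat.card (MulAction.stabilizer (DihedralGroup n) f) = 1 := by
    rw [Subgroup.card_eq_one]
    constructor
    · intro h
      rw [Subgroup.eq_bot_iff_forall]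
      intro g hg
      exact h g (MulAction.mem_stabilizer_iff.mp hg)
    · intro h g hg
      have : g ∈ MulAction.stabilizer (DihedralGroup n) f :=
        MulAction.mem_stabilizer_iff.mpr hg
      rw [h] at this
      exact this
  rw [hstab]
  constructor
  · intro h; rw [h, mul_one] at horb; exact horb
  · intro h
    rw [h] at horb
    have hpos : 0 < 2 * n := by have := NeZero.pos n; omega
    exact Nat.eq_of_mul_eq_mul_left hpos (by rw [horb, mul_one])

lemma card_free_eq_orbits (n : ℕ) [NeZero n] (A : Type*) [Fintype A] :
    Nat.card {f : DihedralGroup n → A // Free f}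
      = Nat.card {ω : MulAction.orbitRel.Quotient (DihedralGroup n) (DihedralGroup n → A) //
          Nat.card ω.orbit = 2 * n} * (2 * n) := by
  classical
  set t := Finset.univ.filter
    (fun ω : MulAction.orbitRel.Quotient (DihedralGroup n) (DihedralGroup n → A) =>
      Nat.card ω.orbit = 2 * n) with ht
  have key : (Finset.univ.filter (fun f : DihedralGroup n → A => Free f)).card
      = ∑ ω ∈ t, ((Finset.univ.filter (fun f : DihedralGroup n → A => Free f)).filter
          (fun f => Quotient.mk'' f = ω)).card := by
    apply Finset.card_eq_sum_card_fiberwise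
    intro f hf
    rw [Finset.mem_coe, Finset.mem_filter] at hf
    rw [Finset.mem_coe, ht, Finset.mem_filter]
    refine ⟨Finset.mem_univ _, ?_⟩
    rw [MulAction.orbitRel.Quotient.orbit_mk]
    exact (free_iff_card_orbit f).mp hf.2
  have fib : ∀ ω ∈ t, ((Finset.univ.filter (fun f : DihedralGroup n → A => Free f)).filter
      (fun f => Quotient.mk'' f = ω)).card = 2 * n := by
    intro ω hω
    rw [ht, Finset.mem_filter] at hω
    have hset : ((Finset.univ.filter (fun f : DihedralGroup n → A => Free f)).filter
        (fun f => Quotient.mk'' f = ω)) = ω.orbit.toFinset := by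
      ext f
      rw [Finset.mem_filter, Finset.mem_filter, Set.mem_toFinset,
        MulAction.orbitRel.Quotient.mem_orbit]
      constructor
      · rintro ⟨-, h⟩; exact h
      · intro h
        refine ⟨⟨Finset.mem_univ _, ?_⟩, h⟩
        apply (free_iff_card_orbit f).mpr
        obtain ⟨-, h2⟩ := hω
        rw [← h, MulAction.orbitRel.Quotient.orbit_mk] at h2
        exact h2
    rw [hset, Set.toFinset_card, ← Nat.card_eq_fintype_card]
    exact hω.2
  rw [Finset.sum_congr rfl fib, Finset.sum_const, smul_eq_mul] at key
  rw [Nat.card_eq_fintype_card, Fintype.card_subtype, key,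
    Nat.card_eq_fintype_card, Fintype.card_subtype]

end PrismAux


/-- The number of free orbits (orbits of cardinality `2n`,
i.e. primitive colorings up to symmetry) of `D_n` acting on colorings of the
vertices of a regular `n`-prism with `k = |A| ≥ 2` colors is
`(1/2) ∑_{d ∣ n} μ(n/d) ((1/n) k^{2d} - k^d)`. -/
theorem card_free_orbits_prism (n : ℕ) (hn : 1 ≤ n) (A : Type*) [Fintype A]
    (hA : 2 ≤ Fintype.card A) :
    (Nat.card {ω : MulAction.orbitRel.Quotient (DihedralGroup n)
        (DihedralGroup n → A) // Nat.card ω.orbit = 2 * n} : ℚ) =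
      (1 / 2) * ∑ d ∈ n.divisors, (ArithmeticFunction.moebius (n / d) : ℚ) *
        ((1 / (n : ℚ)) * (Fintype.card A : ℚ) ^ (2 * d) - (Fintype.card A : ℚ) ^ d) := by
  haveI : NeZero n := ⟨by omega⟩
  have hn0 : (n : ℚ) ≠ 0 := Nat.cast_ne_zero.mpr (by omega)
  have h2n0 : (2 * (n : ℚ)) ≠ 0 := by
    intro h
    apply hn0
    linarith [h]
  set k : ℚ := (Fintype.card A : ℚ) with hk
  set S1 : ℚ := ∑ d ∈ n.divisors, (ArithmeticFunction.moebius (n / d) : ℚ) * k ^ (2 * d)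
    with hS1
  set S2 : ℚ := ∑ d ∈ n.divisors, (ArithmeticFunction.moebius (n / d) : ℚ) * k ^ d with hS2
  have hAA : (Nat.card {g : ZMod n → A × A // PrismAux.Aper g} : ℚ) = S1 := by
    rw [PrismAux.card_aper n (A × A), hS1]
    apply Finset.sum_congr rfl
    intro d _
    congr 1
    rw [Fintype.card_prod, hk]
    push_cast
    rw [pow_mul]
    ring
  have hA2 : (Nat.card {h : ZMod n → A // PrismAux.Aper h} : ℚ) = S2 := by
    rw [PrismAux.card_aper n A, hS2]
  have hnat : Nat.card {f : DihedralGroup n → A // PrismAux.Free f}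
      + n * Nat.card {h : ZMod n → A // PrismAux.Aper h}
      = Nat.card {g : ZMod n → A × A // PrismAux.Aper g} := by
    rw [← PrismAux.card_norot_refl A n, ← PrismAux.card_norot_split A n,
      PrismAux.card_norot A n]
  rw [PrismAux.card_free_eq_orbits n A] at hnat
  have hkey : (Nat.card {ω : MulAction.orbitRel.Quotient (DihedralGroup n)
      (DihedralGroup n → A) // Nat.card ω.orbit = 2 * n} : ℚ) * (2 * n) + n * S2 = S1 := by
    rw [← hAA, ← hA2]
    exact_mod_cast congrArg (Nat.cast : ℕ → ℚ) hnat
  apply mul_right_cancel₀ h2n0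
  have hr : (1 / 2 : ℚ) * (∑ d ∈ n.divisors, (ArithmeticFunction.moebius (n / d) : ℚ) *
      ((1 / (n : ℚ)) * k ^ (2 * d) - k ^ d)) * (2 * n) = S1 - (n : ℚ) * S2 := by
    rw [hS1, hS2, Finset.mul_sum, Finset.sum_mul, Finset.mul_sum,
      ← Finset.sum_sub_distrib]
    apply Finset.sum_congr rfl
    intro d _
    field_simp
  rw [hr]
  linarith [hkey]
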